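/- arXiv:0809.2979 — 5 statements merged into one kernel-verified Lean document; each statement's English description precedes it below -/
import Mathlib

section
/- Every k-uniform hypergraph with maximum degree Δ ≥ 1 has a proper vertex coloring (no edge monochromatic) using at most ⌈4·Δ^(1/(k-1))⌉ colors. -/
open Finset
open scoped Classical

namespace Stmt0Aux

variable {V : Type} [Fintype V] [DecidableEq V]

/-- number of colorings supported on `S` with no edge inside `S` monochromatic -/
noncomputable def P (E : Finset (Finset V)) (q : ℕ) (z : Fin q) (S : Finset V) : ℕ :=
  (Finset.univ.filter (fun f : V → Fin q =>
    (∀ w ∉ S, f w = z) ∧ ∀ e ∈ E, e ⊆ S → ∃ x ∈ e, ∃ y ∈ e, f x ≠ f y)).card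

lemma exists_coloring (E : Finset (Finset V)) (k Δ q : ℕ) (hk : 2 ≤ k) (hq : 2 ≤ q)
    (hkey : 2 ^ k * Δ ≤ q ^ (k - 1))
    (huniform : ∀ e ∈ E, e.card = k)
    (hdeg : ∀ v : V, (E.filter (fun e => v ∈ e)).card ≤ Δ) :
    ∃ f : V → Fin q, ∀ e ∈ E, ∃ x ∈ e, ∃ y ∈ e, f x ≠ f y := by
  have hq0 : 0 < q := by omega
  set z : Fin q := ⟨0, hq0⟩ with hz
  -- the main inductive step
  have main : ∀ n : ℕ, ∀ S : Finset V, S.card ≤ n → ∀ v ∈ S,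
      q * P E q z (S.erase v) ≤ 2 * P E q z S := by
    intro n
    induction n with
    | zero =>
      intro S hS v hv
      have : S = ∅ := Finset.card_eq_zero.mp (Nat.le_zero.mp hS)
      simp [this] at hv
    | succ n ih =>
      intro S hS v hv
      set S' : Finset V := S.erase v with hS'
      have hScard : S'.card = S.card - 1 := Finset.card_erase_of_mem hv
      have hS'le : S'.card ≤ n := by
        have h1 : 1 ≤ S.card := Finset.card_pos.mpr ⟨v, hv⟩
        omega
      have h2k : 2 * (2 ^ (k - 1) * Δ) = 2 ^ k * Δ := by
        rw [← mul_assoc, ← pow_succ']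
        congr 2
        omega
      -- the chain lemma
      have chain : ∀ B : Finset V, B ⊆ S' →
          q ^ B.card * P E q z (S' \ B) ≤ 2 ^ B.card * P E q z S' := by
        intro B
        induction B using Finset.induction_on with
        | empty => simp
        | @insert u B' hu ihB =>
          intro hBS
          have huS : u ∈ S' := hBS (Finset.mem_insert_self u B')
          have hB'S : B' ⊆ S' := fun x hx => hBS (Finset.mem_insert_of_mem hx)
          have hu2 : u ∈ S' \ B' := Finset.mem_sdiff.mpr ⟨huS, hu⟩
          have hcard : (S' \ B').card ≤ n := le_trans (Finset.card_le_card (Finset.sdiff_subset)) hS'le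
          have hstep := ih (S' \ B') hcard u hu2
          have hrw : (S' \ B').erase u = S' \ insert u B' := by
            ext x
            simp [Finset.mem_erase, Finset.mem_sdiff, Finset.mem_insert]
            tauto
          rw [hrw] at hstep
          rw [Finset.card_insert_of_notMem hu]
          calc q ^ (B'.card + 1) * P E q z (S' \ insert u B')
              = q ^ B'.card * (q * P E q z (S' \ insert u B')) := by ring
            _ ≤ q ^ B'.card * (2 * P E q z (S' \ B')) := Nat.mul_le_mul_left _ hstep
            _ = 2 * (q ^ B'.card * P E q z (S' \ B')) := by ring
            _ ≤ 2 * (2 ^ B'.card * P E q z S') := Nat.mul_le_mul_left _ (ihB hB'S)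
            _ = 2 ^ (B'.card + 1) * P E q z S' := by ring
      -- T : colorings supported on S, valid on S'
      set T : Finset (V → Fin q) := Finset.univ.filter (fun f : V → Fin q =>
        (∀ w ∉ S, f w = z) ∧ ∀ e ∈ E, e ⊆ S' → ∃ x ∈ e, ∃ y ∈ e, f x ≠ f y) with hT
      -- injection 1 : q * P S' ≤ T.card
      have h1 : q * P E q z S' ≤ T.card := by
        have := Finset.card_le_card_of_injOn
          (f := fun p : (V → Fin q) × Fin q => Function.update p.1 v p.2)
          (s := (Finset.univ.filter (fun f : V → Fin q =>
            (∀ w ∉ S', f w = z) ∧ ∀ e ∈ E, e ⊆ S' → ∃ x ∈ e, ∃ y ∈ e, f x ≠ f y)) ×ˢ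
            (Finset.univ : Finset (Fin q)))
          (t := T) ?_ ?_
        · rw [Finset.card_product, Finset.card_univ, Fintype.card_fin] at this
          rw [P, mul_comm]
          exact this
        · rintro ⟨g, c⟩ hp
          rw [Finset.mem_coe, Finset.mem_product, Finset.mem_filter] at hp
          obtain ⟨⟨-, hsupp, hvalid⟩, -⟩ := hp
          rw [Finset.mem_coe, hT, Finset.mem_filter]
          refine ⟨Finset.mem_univ _, ?_, ?_⟩
          · intro w hw
            have hwv : w ≠ v := fun h => hw (h ▸ hv)
            show Function.update g v c w = z
            rw [Function.update_of_ne hwv]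
            exact hsupp w (fun h => hw (Finset.erase_subset v S h))
          · intro e he hes
            obtain ⟨x, hx, y, hy, hxy⟩ := hvalid e he hes
            have hxv : x ≠ v := fun h => (Finset.mem_erase.mp (hes hx)).1 (h ▸ rfl)
            have hyv : y ≠ v := fun h => (Finset.mem_erase.mp (hes hy)).1 (h ▸ rfl)
            refine ⟨x, hx, y, hy, ?_⟩
            show Function.update g v c x ≠ Function.update g v c y
            rwa [Function.update_of_ne hxv, Function.update_of_ne hyv]
        · rintro ⟨g, c⟩ hp ⟨g', c'⟩ hp' heq
          rw [Finset.mem_coe, Finset.mem_product, Finset.mem_filter] at hp hp'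
          obtain ⟨⟨-, hsupp, -⟩, -⟩ := hp
          obtain ⟨⟨-, hsupp', -⟩, -⟩ := hp'
          replace heq : Function.update g v c = Function.update g' v c' := heq
          have hc : c = c' := by
            have := congrFun heq v
            simpa using this
          have hg : g = g' := by
            funext w
            by_cases hwv : w = v
            · subst hwv
              have e1 : g w = z := hsupp w (Finset.notMem_erase w S)
              have e2 : g' w = z := hsupp' w (Finset.notMem_erase w S)
              rw [e1, e2]
            · have := congrFun heq w
              rwa [Function.update_of_ne hwv, Function.update_of_ne hwv] at this
          rw [hc, hg]
      -- D : dangerous edges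
      set D : Finset (Finset V) := E.filter (fun e => v ∈ e ∧ e ⊆ S) with hD
      have hDcard : D.card ≤ Δ := by
        refine le_trans (Finset.card_le_card ?_) (hdeg v)
        intro e he
        rw [hD, Finset.mem_filter] at he
        rw [Finset.mem_filter]
        exact ⟨he.1, he.2.1⟩
      -- union bound
      have h2 : T.card ≤ P E q z S +
          ∑ e ∈ D, (T.filter (fun f => ∀ x ∈ e, ∀ y ∈ e, f x = f y)).card := by
        classical
        have hsplit : T.card = (T.filter (fun f => ∀ e ∈ E, e ⊆ S → ∃ x ∈ e, ∃ y ∈ e, f x ≠ f y)).card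
            + (T.filter (fun f => ¬ ∀ e ∈ E, e ⊆ S → ∃ x ∈ e, ∃ y ∈ e, f x ≠ f y)).card :=
          (Finset.card_filter_add_card_filter_not _).symm
        have hgood : (T.filter (fun f => ∀ e ∈ E, e ⊆ S → ∃ x ∈ e, ∃ y ∈ e, f x ≠ f y)).card
            ≤ P E q z S := by
          apply Finset.card_le_card
          intro f hf
          rw [Finset.mem_filter, hT, Finset.mem_filter] at hf
          obtain ⟨⟨-, hsupp, -⟩, hval⟩ := hf
          exact Finset.mem_filter.mpr ⟨Finset.mem_univ _, hsupp, hval⟩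
        have hbad : (T.filter (fun f => ¬ ∀ e ∈ E, e ⊆ S → ∃ x ∈ e, ∃ y ∈ e, f x ≠ f y)).card
            ≤ ∑ e ∈ D, (T.filter (fun f => ∀ x ∈ e, ∀ y ∈ e, f x = f y)).card := by
          refine le_trans (Finset.card_le_card ?_) (Finset.card_biUnion_le)
          intro f hf
          rw [Finset.mem_filter] at hf
          obtain ⟨hfT, hbadf⟩ := hf
          push_neg at hbadf
          obtain ⟨e, he, hes, hmono'⟩ := hbadf
          have hve : v ∈ e := by
            by_contra hve
            have : e ⊆ S' := fun x hx => Finset.mem_erase.mpr ⟨fun h => hve (h ▸ hx), hes hx⟩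
            obtain ⟨x, hx, y, hy, hxy⟩ := ((Finset.mem_filter.mp hfT).2).2 e he this
            exact hxy (hmono' x hx y hy)
          refine Finset.mem_biUnion.mpr ⟨e, ?_, ?_⟩
          · rw [hD, Finset.mem_filter]; exact ⟨he, hve, hes⟩
          · exact Finset.mem_filter.mpr ⟨hfT, hmono'⟩
        rw [hsplit]
        exact Nat.add_le_add hgood hbad
      -- injection 2 : for each dangerous edge
      have h3 : ∀ e ∈ D, (T.filter (fun f => ∀ x ∈ e, ∀ y ∈ e, f x = f y)).card
          ≤ q * P E q z (S \ e) := by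
        intro e heD
        rw [hD, Finset.mem_filter] at heD
        obtain ⟨heE, hve, hes⟩ := heD
        have := Finset.card_le_card_of_injOn
          (f := fun f : V → Fin q => ((fun w => if w ∈ e then z else f w, f v) : (V → Fin q) × Fin q))
          (s := T.filter (fun f => ∀ x ∈ e, ∀ y ∈ e, f x = f y))
          (t := (Finset.univ.filter (fun f : V → Fin q =>
            (∀ w ∉ S \ e, f w = z) ∧ ∀ e₂ ∈ E, e₂ ⊆ S \ e → ∃ x ∈ e₂, ∃ y ∈ e₂, f x ≠ f y)) ×ˢ
            (Finset.univ : Finset (Fin q))) ?_ ?_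
        · rw [Finset.card_product, Finset.card_univ, Fintype.card_fin] at this
          rw [P, mul_comm]
          exact this
        · intro f hf
          rw [Finset.mem_coe, Finset.mem_filter, hT, Finset.mem_filter] at hf
          obtain ⟨⟨-, hsupp, hval⟩, hmono⟩ := hf
          rw [Finset.mem_coe, Finset.mem_product, Finset.mem_filter]
          refine ⟨⟨Finset.mem_univ _, ?_, ?_⟩, Finset.mem_univ _⟩
          · intro w hw
            by_cases hwe : w ∈ e
            · simp [hwe]
            · have hwS : w ∉ S := fun h => hw (Finset.mem_sdiff.mpr ⟨h, hwe⟩)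
              simp [hwe, hsupp w hwS]
          · intro e₂ he₂ hsub
            have hsub' : e₂ ⊆ S' := by
              intro x hx
              have := Finset.mem_sdiff.mp (hsub hx)
              exact Finset.mem_erase.mpr ⟨fun h => this.2 (h ▸ hve), this.1⟩
            obtain ⟨x, hx, y, hy, hxy⟩ := hval e₂ he₂ hsub'
            have hxe : x ∉ e := (Finset.mem_sdiff.mp (hsub hx)).2
            have hye : y ∉ e := (Finset.mem_sdiff.mp (hsub hy)).2
            exact ⟨x, hx, y, hy, by simpa [hxe, hye] using hxy⟩
        · intro f hf f' hf' heq
          rw [Finset.mem_coe, Finset.mem_filter] at hf hf'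
          obtain ⟨-, hmono⟩ := hf
          obtain ⟨-, hmono'⟩ := hf'
          have h1' := congrArg Prod.fst heq
          have h2' := congrArg Prod.snd heq
          simp only at h1' h2'
          funext w
          by_cases hwe : w ∈ e
          · calc f w = f v := hmono w hwe v hve
              _ = f' v := h2'
              _ = f' w := hmono' v hve w hwe
          · have := congrFun h1' w
            simpa [hwe] using this
      -- combine
      have hSe : ∀ e ∈ D, S \ e = S' \ (e.erase v) := by
        intro e heD
        rw [hD, Finset.mem_filter] at heD
        ext x
        simp only [Finset.mem_sdiff, Finset.mem_erase, hS']
        constructor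
        · rintro ⟨hxS, hxe⟩
          exact ⟨⟨fun h => hxe (h ▸ heD.2.1), hxS⟩, fun h => hxe h.2⟩
        · rintro ⟨⟨hxv, hxS⟩, hxe⟩
          exact ⟨hxS, fun h => hxe ⟨hxv, h⟩⟩
      have h4 : ∀ e ∈ D, q ^ (k - 1) * P E q z (S \ e) ≤ 2 ^ (k - 1) * P E q z S' := by
        intro e heD
        have heD' := heD
        rw [hD, Finset.mem_filter] at heD'
        obtain ⟨heE, hve, hes⟩ := heD'
        have hcard : (e.erase v).card = k - 1 := by
          rw [Finset.card_erase_of_mem hve, huniform e heE]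
        have hsub : e.erase v ⊆ S' := by
          intro x hx
          rw [Finset.mem_erase] at hx
          exact Finset.mem_erase.mpr ⟨hx.1, hes hx.2⟩
        have := chain (e.erase v) hsub
        rw [hcard, hSe e heD] at *
        rw [hcard] at this
        exact this
      -- final arithmetic
      have hstep2 : q ^ (k - 1) * (q * P E q z S') ≤
          q ^ (k - 1) * P E q z S + 2 ^ (k - 1) * Δ * (q * P E q z S') := by
        calc q ^ (k - 1) * (q * P E q z S')
            ≤ q ^ (k - 1) * (P E q z S +
              ∑ e ∈ D, (T.filter (fun f => ∀ x ∈ e, ∀ y ∈ e, f x = f y)).card) :=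
              Nat.mul_le_mul_left _ (le_trans h1 h2)
          _ = q ^ (k - 1) * P E q z S +
              ∑ e ∈ D, q ^ (k - 1) * (T.filter (fun f => ∀ x ∈ e, ∀ y ∈ e, f x = f y)).card := by
              rw [Nat.mul_add, Finset.mul_sum]
          _ ≤ q ^ (k - 1) * P E q z S + ∑ e ∈ D, 2 ^ (k - 1) * (q * P E q z S') := by
              apply Nat.add_le_add_left
              apply Finset.sum_le_sum
              intro e heD
              calc q ^ (k - 1) * (T.filter (fun f => ∀ x ∈ e, ∀ y ∈ e, f x = f y)).card
                  ≤ q ^ (k - 1) * (q * P E q z (S \ e)) := Nat.mul_le_mul_left _ (h3 e heD)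
                _ = q * (q ^ (k - 1) * P E q z (S \ e)) := by ring
                _ ≤ q * (2 ^ (k - 1) * P E q z S') := Nat.mul_le_mul_left _ (h4 e heD)
                _ = 2 ^ (k - 1) * (q * P E q z S') := by ring
          _ ≤ q ^ (k - 1) * P E q z S + Δ * (2 ^ (k - 1) * (q * P E q z S')) := by
              apply Nat.add_le_add_left
              rw [Finset.sum_const, smul_eq_mul]
              exact Nat.mul_le_mul_right _ hDcard
          _ = q ^ (k - 1) * P E q z S + 2 ^ (k - 1) * Δ * (q * P E q z S') := by ring
      -- from hstep2 and hkey derive goal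
      have hfin : q ^ (k - 1) * (q * P E q z S') ≤ q ^ (k - 1) * (2 * P E q z S) := by
        have hmul : 2 * (q ^ (k - 1) * (q * P E q z S')) ≤
            2 * (q ^ (k - 1) * P E q z S) + 2 ^ k * Δ * (q * P E q z S') := by
          calc 2 * (q ^ (k - 1) * (q * P E q z S'))
              ≤ 2 * (q ^ (k - 1) * P E q z S + 2 ^ (k - 1) * Δ * (q * P E q z S')) :=
                Nat.mul_le_mul_left _ hstep2
            _ = 2 * (q ^ (k - 1) * P E q z S) + 2 * (2 ^ (k - 1) * Δ) * (q * P E q z S') := by ring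
            _ = 2 * (q ^ (k - 1) * P E q z S) + 2 ^ k * Δ * (q * P E q z S') := by rw [h2k]
        have hkey' : 2 ^ k * Δ * (q * P E q z S') ≤ q ^ (k - 1) * (q * P E q z S') :=
          Nat.mul_le_mul_right _ hkey
        have e3 : 2 * (q ^ (k - 1) * (q * P E q z S')) ≤
            2 * (q ^ (k - 1) * P E q z S) + q ^ (k - 1) * (q * P E q z S') :=
          le_trans hmul (Nat.add_le_add_left hkey' _)
        have e4 : q ^ (k - 1) * (q * P E q z S') + q ^ (k - 1) * (q * P E q z S') ≤
            2 * (q ^ (k - 1) * P E q z S) + q ^ (k - 1) * (q * P E q z S') := by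
          calc q ^ (k - 1) * (q * P E q z S') + q ^ (k - 1) * (q * P E q z S')
              = 2 * (q ^ (k - 1) * (q * P E q z S')) := by ring
            _ ≤ _ := e3
        have e5 : q ^ (k - 1) * (q * P E q z S') ≤ 2 * (q ^ (k - 1) * P E q z S) :=
          le_of_add_le_add_right e4
        calc q ^ (k - 1) * (q * P E q z S') ≤ 2 * (q ^ (k - 1) * P E q z S) := e5
          _ = q ^ (k - 1) * (2 * P E q z S) := by ring
      have hqpos : 0 < q ^ (k - 1) := pow_pos hq0 _
      exact Nat.le_of_mul_le_mul_left hfin hqpos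
  -- positivity of P
  have ppos : ∀ n : ℕ, ∀ S : Finset V, S.card ≤ n → 1 ≤ P E q z S := by
    intro n
    induction n with
    | zero =>
      intro S hS
      have hSe : S = ∅ := Finset.card_eq_zero.mp (Nat.le_zero.mp hS)
      subst hSe
      rw [P]
      apply Finset.card_pos.mpr
      refine ⟨fun _ => z, Finset.mem_filter.mpr ⟨Finset.mem_univ _, fun _ _ => rfl, ?_⟩⟩
      intro e he hsub
      exfalso
      have he0 : e = ∅ := Finset.subset_empty.mp hsub
      have hec := huniform e he
      rw [he0, Finset.card_empty] at hec
      omega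
    | succ n ih =>
      intro S hS
      rcases Finset.eq_empty_or_nonempty S with hSe | ⟨v, hv⟩
      · exact ih S (by simp [hSe])
      · have h1 : q * P E q z (S.erase v) ≤ 2 * P E q z S := main (n + 1) S hS v hv
        have h2 : 1 ≤ P E q z (S.erase v) := by
          apply ih
          have := Finset.card_erase_of_mem hv
          have h3 : 1 ≤ S.card := Finset.card_pos.mpr ⟨v, hv⟩
          omega
        have : 2 ≤ q * P E q z (S.erase v) := le_trans hq (Nat.le_mul_of_pos_right q h2)
        omega
  -- conclude
  have huniv : 1 ≤ P E q z Finset.univ := ppos (Finset.univ.card) Finset.univ le_rfl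
  rw [P] at huniv
  obtain ⟨f, hf⟩ := Finset.card_pos.mp huniv
  rw [Finset.mem_filter] at hf
  exact ⟨f, fun e he => hf.2.2 e he (Finset.subset_univ e)⟩

end Stmt0Aux

/-- Every k-uniform hypergraph with maximum degree Δ ≥ 1 has a proper coloring
(no edge monochromatic) with at most ⌈4·Δ^(1/(k-1))⌉ colors. -/
theorem stmt0 (V : Type) [Fintype V] [DecidableEq V] (E : Finset (Finset V))
    (k Δ : ℕ) (hk : 2 ≤ k) (hΔ : 1 ≤ Δ)
    (huniform : ∀ e ∈ E, e.card = k)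
    (hdeg : ∀ v : V, (E.filter (fun e => v ∈ e)).card ≤ Δ) :
    ∃ f : V → Fin (⌈(4 : ℝ) * (Δ : ℝ) ^ ((1 : ℝ) / ((k : ℝ) - 1))⌉₊),
      ∀ e ∈ E, ∃ x ∈ e, ∃ y ∈ e, f x ≠ f y := by
  set q : ℕ := ⌈(4 : ℝ) * (Δ : ℝ) ^ ((1 : ℝ) / ((k : ℝ) - 1))⌉₊ with hqdef
  have hk1 : (1 : ℝ) ≤ (k : ℝ) - 1 := by
    have : (2 : ℝ) ≤ (k : ℝ) := by exact_mod_cast hk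
    linarith
  have hΔ1 : (1 : ℝ) ≤ (Δ : ℝ) := by exact_mod_cast hΔ
  have hrpos : (0 : ℝ) ≤ (1 : ℝ) / ((k : ℝ) - 1) := by positivity
  have hΔr : (1 : ℝ) ≤ (Δ : ℝ) ^ ((1 : ℝ) / ((k : ℝ) - 1)) :=
    Real.one_le_rpow hΔ1 hrpos
  have hq4 : 4 ≤ q := by
    have h4 : (4 : ℝ) ≤ (4 : ℝ) * (Δ : ℝ) ^ ((1 : ℝ) / ((k : ℝ) - 1)) := by nlinarith
    calc (4 : ℕ) = ⌈(4 : ℝ)⌉₊ := by norm_num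
      _ ≤ q := Nat.ceil_le_ceil h4
  have hq2 : 2 ≤ q := by omega
  -- key inequality
  have hkey : 2 ^ k * Δ ≤ q ^ (k - 1) := by
    have hqle : (4 : ℝ) * (Δ : ℝ) ^ ((1 : ℝ) / ((k : ℝ) - 1)) ≤ (q : ℝ) := Nat.le_ceil _
    have hpow : ((4 : ℝ) * (Δ : ℝ) ^ ((1 : ℝ) / ((k : ℝ) - 1))) ^ (k - 1) ≤ (q : ℝ) ^ (k - 1) := by
      apply pow_le_pow_left₀ (by positivity) hqle
    have hΔpow : ((Δ : ℝ) ^ ((1 : ℝ) / ((k : ℝ) - 1))) ^ (k - 1 : ℕ) = (Δ : ℝ) := by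
      rw [← Real.rpow_natCast ((Δ : ℝ) ^ ((1 : ℝ) / ((k : ℝ) - 1))) (k - 1), ← Real.rpow_mul (by positivity)]
      have hk1' : ((k - 1 : ℕ) : ℝ) = (k : ℝ) - 1 := by
        have : (1 : ℕ) ≤ k := by omega
        push_cast [this]
        ring
      rw [hk1']
      have hne : (k : ℝ) - 1 ≠ 0 := by linarith
      rw [one_div, inv_mul_cancel₀ hne, Real.rpow_one]
    have hmain : (2 : ℝ) ^ k * (Δ : ℝ) ≤ (q : ℝ) ^ (k - 1) := by
      have h4k : (2 : ℝ) ^ k ≤ (4 : ℝ) ^ (k - 1) := by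
        have : (4 : ℝ) ^ (k - 1) = 2 ^ (2 * (k - 1)) := by
          rw [pow_mul]; norm_num
        rw [this]
        apply pow_le_pow_right₀ (by norm_num)
        omega
      calc (2 : ℝ) ^ k * (Δ : ℝ) ≤ (4 : ℝ) ^ (k - 1) * (Δ : ℝ) := by
            apply mul_le_mul_of_nonneg_right h4k (by positivity)
        _ = ((4 : ℝ) * (Δ : ℝ) ^ ((1 : ℝ) / ((k : ℝ) - 1))) ^ (k - 1) := by
            rw [mul_pow, hΔpow]
        _ ≤ (q : ℝ) ^ (k - 1) := hpow
    exact_mod_cast hmain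
  exact Stmt0Aux.exists_coloring E k Δ q hk hq2 hkey huniform hdeg
end

section
/- Every k-uniform hypergraph with n vertices and average degree d ≥ 1 contains an independent set of size at least c·n/d^(1/(k-1)), where c > 0 depends only on k. -/
open Finset

lemma sumB {V : Type*} [DecidableEq V] (p q : ℝ) (s : Finset V) :
    ∑ A ∈ s.powerset, p ^ A.card * q ^ (s.card - A.card) = (p + q) ^ s.card := by
  induction s using Finset.induction_on with
  | empty => simp
  | @insert a s ha ih =>
    rw [Finset.sum_powerset_insert ha, Finset.card_insert_of_notMem ha]
    have h1 : ∀ t ∈ s.powerset, p ^ t.card * q ^ (s.card + 1 - t.card)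
        = q * (p ^ t.card * q ^ (s.card - t.card)) := by
      intro t ht
      have : t.card ≤ s.card := Finset.card_le_card (Finset.mem_powerset.mp ht)
      rw [show s.card + 1 - t.card = (s.card - t.card) + 1 by omega, pow_succ]
      ring
    have h2 : ∀ t ∈ s.powerset, p ^ (insert a t).card * q ^ (s.card + 1 - (insert a t).card)
        = p * (p ^ t.card * q ^ (s.card - t.card)) := by
      intro t ht
      have hts : t ⊆ s := Finset.mem_powerset.mp ht
      have hat : a ∉ t := fun h => ha (hts h)
      have : t.card ≤ s.card := Finset.card_le_card hts
      rw [Finset.card_insert_of_notMem hat,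
        show s.card + 1 - (t.card + 1) = s.card - t.card by omega, pow_succ]
      ring
    rw [Finset.sum_congr rfl h1, Finset.sum_congr rfl h2, ← Finset.mul_sum, ← Finset.mul_sum,
      ih, pow_succ]
    ring

lemma sumC {V : Type*} [DecidableEq V] (p : ℝ) (s e : Finset V) (he : e ⊆ s) :
    ∑ A ∈ s.powerset.filter (fun A => e ⊆ A),
      p ^ A.card * (1 - p) ^ (s.card - A.card) = p ^ e.card := by
  have hset : s.powerset.filter (fun A => e ⊆ A)
      = (s \ e).powerset.image (fun B => B ∪ e) := by
    ext A
    simp only [Finset.mem_filter, Finset.mem_powerset, Finset.mem_image]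
    constructor
    · rintro ⟨hAs, heA⟩
      exact ⟨A \ e, Finset.sdiff_subset_sdiff hAs (le_refl e), Finset.sdiff_union_of_subset heA⟩
    · rintro ⟨B, hB, rfl⟩
      exact ⟨Finset.union_subset ((Finset.subset_sdiff.mp hB).1) he, Finset.subset_union_right⟩
  rw [hset, Finset.sum_image]
  · have hval : ∀ B ∈ (s \ e).powerset,
        p ^ (B ∪ e).card * (1 - p) ^ (s.card - (B ∪ e).card)
        = p ^ e.card * (p ^ B.card * (1 - p) ^ ((s \ e).card - B.card)) := by
      intro B hB
      have hB' := Finset.mem_powerset.mp hB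
      have hdisj : Disjoint B e := (Finset.subset_sdiff.mp hB').2
      have hc : (B ∪ e).card = B.card + e.card := Finset.card_union_of_disjoint hdisj
      have h1 : (s \ e).card = s.card - e.card := Finset.card_sdiff_of_subset he
      have h2 : B.card ≤ (s \ e).card := Finset.card_le_card hB'
      have h3 : e.card ≤ s.card := Finset.card_le_card he
      rw [hc, show s.card - (B.card + e.card) = (s \ e).card - B.card by omega, pow_add]
      ring
    rw [Finset.sum_congr rfl hval, ← Finset.mul_sum, sumB]
    norm_num
  · intro B1 h1 B2 h2 hEq
    have d1 : Disjoint B1 e := (Finset.subset_sdiff.mp (Finset.mem_powerset.mp h1)).2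
    have d2 : Disjoint B2 e := (Finset.subset_sdiff.mp (Finset.mem_powerset.mp h2)).2
    have : (B1 ∪ e) \ e = (B2 ∪ e) \ e := by rw [show B1 ∪ e = B2 ∪ e from hEq]
    rwa [Finset.union_sdiff_cancel_right d1, Finset.union_sdiff_cancel_right d2] at this

lemma deletion {V : Type*} [DecidableEq V] (A : Finset V) (E' : Finset (Finset V))
    (hne : ∀ e ∈ E', e.Nonempty) :
    ∃ S, S ⊆ A ∧ (∀ e ∈ E', ¬ e ⊆ S) ∧ A.card ≤ S.card + E'.card := by
  induction E' using Finset.induction_on with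
  | empty => exact ⟨A, subset_rfl, by simp, by simp⟩
  | @insert e E' he ih =>
    obtain ⟨S, hSA, hind, hcard⟩ := ih (fun f hf => hne f (Finset.mem_insert_of_mem hf))
    by_cases heS : e ⊆ S
    · obtain ⟨x, hx⟩ := hne e (Finset.mem_insert_self e E')
      refine ⟨S.erase x, (Finset.erase_subset x S).trans hSA, ?_, ?_⟩
      · intro f hf hfsub
        rcases Finset.mem_insert.mp hf with rfl | hf'
        · exact Finset.notMem_erase x S (hfsub hx)
        · exact hind f hf' (hfsub.trans (Finset.erase_subset x S))
      · have hxS : x ∈ S := heS hx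
        have hS1 : 1 ≤ S.card := Finset.card_pos.mpr ⟨x, hxS⟩
        have h2 := Finset.card_erase_of_mem hxS
        rw [Finset.card_insert_of_notMem he]
        omega
    · refine ⟨S, hSA, ?_, ?_⟩
      · intro f hf hfsub
        rcases Finset.mem_insert.mp hf with rfl | hf'
        · exact heS hfsub
        · exact hind f hf' hfsub
      · rw [Finset.card_insert_of_notMem he]; omega

set_option maxHeartbeats 1000000 in
/-- Every k-uniform hypergraph with n vertices and average degree d ≥ 1 has an
independent set of size at least c·n/d^(1/(k-1)), c depending only on k. -/
theorem stmt1 (k : ℕ) (hk : 2 ≤ k) :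
    ∃ c : ℝ, 0 < c ∧
      ∀ (V : Type) [Fintype V] [DecidableEq V] (E : Finset (Finset V)),
        (∀ e ∈ E, e.card = k) →
        (1 : ℝ) ≤ ((k : ℝ) * E.card) / (Fintype.card V) →
        ∃ S : Finset V, (∀ e ∈ E, ¬ e ⊆ S) ∧
          c * (Fintype.card V) /
              (((k : ℝ) * E.card) / (Fintype.card V)) ^ ((1 : ℝ) / ((k : ℝ) - 1))
            ≤ S.card := by
  refine ⟨1/2, by norm_num, ?_⟩
  intro V _ _ E huni hd
  set n := Fintype.card V with hn
  set d : ℝ := (k : ℝ) * E.card / n with hdd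
  -- basic positivity facts
  have hkR : (2:ℝ) ≤ (k:ℝ) := by exact_mod_cast hk
  have hkne : ((k:ℝ) - 1) ≠ 0 := by linarith
  have hd0 : 0 < d := lt_of_lt_of_le one_pos hd
  have hn0 : 0 < n := by
    by_contra h
    have : n = 0 := by omega
    rw [hdd, this] at hd0
    simp at hd0
  have hE0 : (0:ℝ) < E.card := by
    by_contra h
    push_neg at h
    have : (E.card : ℝ) = 0 := le_antisymm h (by positivity)
    rw [hdd, this] at hd0
    simp at hd0
  set p : ℝ := d ^ (-(1 / ((k:ℝ) - 1))) with hp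
  have hp0 : 0 < p := Real.rpow_pos_of_pos hd0 _
  have hkk : (0:ℝ) < (k:ℝ) - 1 := by linarith
  have hp1 : p ≤ 1 := by
    apply Real.rpow_le_one_of_one_le_of_nonpos hd
    have : (0:ℝ) ≤ 1/((k:ℝ)-1) := by positivity
    linarith
  -- weights
  set W : Finset V → ℝ := fun A => p ^ A.card * (1 - p) ^ (n - A.card) with hW
  have hWnn : ∀ A : Finset V, 0 ≤ W A := by
    intro A
    have : 0 ≤ 1 - p := by linarith
    positivity
  have hcu : (Finset.univ : Finset V).card = n := Finset.card_univ
  have hW1 : ∑ A ∈ (Finset.univ : Finset V).powerset, W A = 1 := by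
    have := sumB p (1 - p) (Finset.univ : Finset V)
    simpa [hcu] using this
  -- expected size
  have hS2 : ∑ A ∈ (Finset.univ : Finset V).powerset, W A * A.card = n * p := by
    have hrew : ∀ A ∈ (Finset.univ : Finset V).powerset,
        W A * (A.card : ℝ) = ∑ v ∈ (Finset.univ : Finset V), if v ∈ A then W A else 0 := by
      intro A _
      rw [Finset.sum_ite_mem, Finset.univ_inter, Finset.sum_const, nsmul_eq_mul, mul_comm]
    rw [Finset.sum_congr rfl hrew, Finset.sum_comm]
    have hinner : ∀ v ∈ (Finset.univ : Finset V),
        (∑ A ∈ (Finset.univ : Finset V).powerset, if v ∈ A then W A else 0) = p := by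
      intro v _
      rw [← Finset.sum_filter]
      have hfe : (Finset.univ : Finset V).powerset.filter (fun A => v ∈ A)
           = (Finset.univ : Finset V).powerset.filter (fun A => {v} ⊆ A) := by
        simp [Finset.singleton_subset_iff]
      rw [hfe]
      have := sumC p (Finset.univ : Finset V) {v}
        (Finset.singleton_subset_iff.mpr (Finset.mem_univ v))
      simpa [hW, hcu] using this
    rw [Finset.sum_congr rfl hinner, Finset.sum_const, nsmul_eq_mul, hcu]
  -- expected number of bad edges
  have hS3 : ∑ A ∈ (Finset.univ : Finset V).powerset,
      W A * ((E.filter (fun e => e ⊆ A)).card : ℝ) = E.card * p ^ k := by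
    have hrew : ∀ A ∈ (Finset.univ : Finset V).powerset,
        W A * ((E.filter (fun e => e ⊆ A)).card : ℝ)
          = ∑ e ∈ E, if e ⊆ A then W A else 0 := by
      intro A _
      rw [Finset.sum_ite, Finset.sum_const, Finset.sum_const_zero, add_zero,
        nsmul_eq_mul, mul_comm]
    rw [Finset.sum_congr rfl hrew, Finset.sum_comm]
    have hinner : ∀ e ∈ E,
        (∑ A ∈ (Finset.univ : Finset V).powerset, if e ⊆ A then W A else 0) = p ^ k := by
      intro e he
      rw [← Finset.sum_filter]
      have := sumC p (Finset.univ : Finset V) e (Finset.subset_univ e)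
      rw [huni e he] at this
      simpa [hW, hcu] using this
    rw [Finset.sum_congr rfl hinner, Finset.sum_const, nsmul_eq_mul]
  -- the objective function
  set F : Finset V → ℝ :=
    fun A => (A.card : ℝ) - ((E.filter (fun e => e ⊆ A)).card : ℝ) with hF
  set c0 : ℝ := (n : ℝ) * p - (E.card : ℝ) * p ^ k with hc0
  have hsumF : ∑ A ∈ (Finset.univ : Finset V).powerset, W A * F A = c0 := by
    have hsplit : ∀ A ∈ (Finset.univ : Finset V).powerset, W A * F A = W A * A.card
        - W A * ((E.filter (fun e => e ⊆ A)).card : ℝ) := fun A _ => by rw [hF]; ring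
    rw [Finset.sum_congr rfl hsplit, Finset.sum_sub_distrib, hS2, hS3, hc0]
  -- there is a good set A
  have hgood : ∃ A ∈ (Finset.univ : Finset V).powerset, c0 ≤ F A := by
    by_contra h
    push_neg at h
    have hlt : ∑ A ∈ (Finset.univ : Finset V).powerset, W A * F A
        < ∑ A ∈ (Finset.univ : Finset V).powerset, W A * c0 := by
      apply Finset.sum_lt_sum
      · intro A hA
        exact mul_le_mul_of_nonneg_left (h A hA).le (hWnn A)
      · refine ⟨Finset.univ, Finset.mem_powerset_self _, ?_⟩
        apply mul_lt_mul_of_pos_left (h _ (Finset.mem_powerset_self _))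
        have : W (Finset.univ : Finset V) = p ^ n := by
          rw [hW]; simp [hcu]
        rw [this]; positivity
    rw [hsumF, ← Finset.sum_mul, hW1, one_mul] at hlt
    exact lt_irrefl _ hlt
  obtain ⟨A, -, hA⟩ := hgood
  -- delete a vertex from each bad edge
  obtain ⟨S, hSA, hind, hcard⟩ := deletion A (E.filter (fun e => e ⊆ A)) (by
    intro e he
    have : e.card = k := huni e (Finset.mem_filter.mp he).1
    exact Finset.card_pos.mp (by omega))
  refine ⟨S, ?_, ?_⟩
  · intro e heE hesub
    by_cases heA : e ⊆ A
    · exact hind e (Finset.mem_filter.mpr ⟨heE, heA⟩) hesub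
    · exact heA (hesub.trans hSA)
  -- size estimate
  have hScard : c0 ≤ (S.card : ℝ) := by
    have h1 : (A.card : ℝ) ≤ (S.card : ℝ) + ((E.filter (fun e => e ⊆ A)).card : ℝ) := by
      exact_mod_cast hcard
    have hA' : c0 ≤ (A.card : ℝ) - ((E.filter (fun e => e ⊆ A)).card : ℝ) := hA
    linarith
  -- numerics : p^(k-1) = 1/d
  have hpk1 : p ^ (k - 1) = d⁻¹ := by
    rw [hp, ← Real.rpow_natCast (d ^ (-(1 / ((k:ℝ) - 1)))) (k - 1),
      ← Real.rpow_mul hd0.le]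
    have hcast : ((k - 1 : ℕ) : ℝ) = (k : ℝ) - 1 := by
      rw [Nat.cast_sub (by omega : 1 ≤ k)]; norm_num
    rw [hcast, show -(1 / ((k:ℝ) - 1)) * ((k:ℝ) - 1) = -1 by field_simp,
      Real.rpow_neg_one]
  have hpk : p ^ k * (E.card : ℝ) = p * n / k := by
    have hk1 : p ^ k = d⁻¹ * p := by
      rw [show k = (k - 1) + 1 by omega, pow_succ, hpk1]
    rw [hk1, hdd]
    have hkne' : (k : ℝ) ≠ 0 := by positivity
    have hnne : (n : ℝ) ≠ 0 := by exact_mod_cast hn0.ne'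
    field_simp
  -- rewrite the goal
  have hdp : d ^ ((1:ℝ) / ((k:ℝ) - 1)) = p⁻¹ := by
    rw [hp, Real.rpow_neg hd0.le, inv_inv]
  rw [hdp]
  rw [div_eq_mul_inv, inv_inv]
  -- final chain
  have hfrac : p * n / k ≤ p * n / 2 := by
    apply div_le_div_of_nonneg_left _ (by norm_num) hkR
    exact mul_nonneg hp0.le (Nat.cast_nonneg n)
  linarith [hScard, hpk, hfrac, hc0]
end

section
/- Let H be a simple k-uniform hypergraph, v a vertex, and consider the family F of (3k−4)-sets S_{x,y} = T_v(x) ∪ T_v(y) ∪ T indexed by covered pairs {x,y} in N_H(v), where T is the (k−2)-set with T ∪ {x,y} ∈ E and T_v(x), T_v(y) are the unique (k−1)-sets with T_v(x)∪{v}, T_v(y)∪{v} edges. Then for any vertex set A with |A| ≥ k, the number of members of F containing A is at most 14k⁴ (i.e., O(1) depending only on k). -/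
/-- For the family F of (3k−4)-sets S_{x,y} = T_v(x) ∪ T_v(y) ∪ T indexed by covered
pairs {x,y} in N_H(v) of a simple k-uniform hypergraph, any vertex set A with
|A| ≥ k is contained in at most 14k⁴ members of F. -/
theorem stmt5 (V : Type) [DecidableEq V] [Fintype V] (E : Finset (Finset V)) (k : ℕ)
    (hk : 3 ≤ k)
    (huniform : ∀ e ∈ E, e.card = k)
    (hsimple : ∀ e ∈ E, ∀ f ∈ E, e ≠ f → (e ∩ f).card ≤ 1)
    (v : V) (A : Finset V) (hA : k ≤ A.card) :
    {p : Finset V | ∃ x y : V, x ≠ y ∧ p = {x, y} ∧ x ≠ v ∧ y ≠ v ∧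
        ∃ Tx Ty T : Finset V,
          v ∉ Tx ∧ x ∈ Tx ∧ insert v Tx ∈ E ∧
          v ∉ Ty ∧ y ∈ Ty ∧ insert v Ty ∈ E ∧
          x ∉ T ∧ y ∉ T ∧ v ∉ T ∧ insert x (insert y T) ∈ E ∧
          A ⊆ Tx ∪ Ty ∪ T}.ncard
      ≤ 14 * k ^ 4 := by
  classical
  set nbr : V → V → Finset V := fun b c => (E.filter fun e => b ∈ e ∧ c ∈ e).biUnion id with hnbr
  have huniq : ∀ e₁ ∈ E, ∀ e₂ ∈ E, ∀ b c : V, b ≠ c → b ∈ e₁ → c ∈ e₁ → b ∈ e₂ → c ∈ e₂ →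
      e₁ = e₂ := by
    intro e₁ he₁ e₂ he₂ b c hbc hb1 hc1 hb2 hc2
    by_contra hne
    have hsub2 : ({b, c} : Finset V) ⊆ e₁ ∩ e₂ := by
      intro z hz
      rcases Finset.mem_insert.mp hz with rfl | hz
      · exact Finset.mem_inter.mpr ⟨hb1, hb2⟩
      · rw [Finset.mem_singleton] at hz; subst hz
        exact Finset.mem_inter.mpr ⟨hc1, hc2⟩
    have h2 : 2 ≤ (e₁ ∩ e₂).card := by
      calc 2 = ({b, c} : Finset V).card := (Finset.card_pair hbc).symm
        _ ≤ _ := Finset.card_le_card hsub2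
    have := hsimple e₁ he₁ e₂ he₂ hne
    omega
  have hsub : ∀ e ∈ E, ∀ b c : V, b ∈ e → c ∈ e → e ⊆ nbr b c := by
    intro e he b c hb hc z hz
    simp only [hnbr, Finset.mem_biUnion, Finset.mem_filter, id]
    exact ⟨e, ⟨he, hb, hc⟩, hz⟩
  have heq : ∀ e ∈ E, ∀ b c : V, b ≠ c → b ∈ e → c ∈ e → nbr b c = e := by
    intro e he b c hbc hb hc
    refine Finset.Subset.antisymm ?_ (hsub e he b c hb hc)
    intro z hz
    simp only [hnbr, Finset.mem_biUnion, Finset.mem_filter, id] at hz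
    obtain ⟨e', ⟨he', hb', hc'⟩, hz⟩ := hz
    rwa [huniq e' he' e he b c hbc hb' hc' hb hc] at hz
  have hcard : ∀ b c : V, b ≠ c → (nbr b c).card ≤ k := by
    intro b c hbc
    by_cases h : ∃ e ∈ E, b ∈ e ∧ c ∈ e
    · obtain ⟨e, he, hb, hc⟩ := h
      rw [heq e he b c hbc hb hc, huniform e he]
    · have hfil : E.filter (fun e => b ∈ e ∧ c ∈ e) = ∅ := by
        rw [Finset.filter_eq_empty_iff]
        intro e he hbc'
        exact h ⟨e, he, hbc'⟩
      simp [hnbr, hfil]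
  have hA' : 1 < (A.erase v).card := by
    have := Finset.pred_card_le_card_erase (s := A) (a := v)
    omega
  obtain ⟨a₀, ha₀', a₁, ha₁', hne01⟩ := Finset.one_lt_card.mp hA'
  have ha₀A : a₀ ∈ A := Finset.mem_of_mem_erase ha₀'
  have ha₁A : a₁ ∈ A := Finset.mem_of_mem_erase ha₁'
  have hv0 : v ≠ a₀ := fun h => (Finset.ne_of_mem_erase ha₀') h.symm
  have hv1 : v ≠ a₁ := fun h => (Finset.ne_of_mem_erase ha₁') h.symm
  have ha₂ex : ∃ a₂ ∈ A.erase v, ((∃ a ∈ A.erase v, a ∉ nbr v a₀) → a₂ ∉ nbr v a₀) := by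
    by_cases h : ∃ a ∈ A.erase v, a ∉ nbr v a₀
    · obtain ⟨a, ha, han⟩ := h
      exact ⟨a, ha, fun _ => han⟩
    · exact ⟨a₀, ha₀', fun hx => absurd hx h⟩
  obtain ⟨a₂, ha₂', ha₂n⟩ := ha₂ex
  have ha₂A : a₂ ∈ A := Finset.mem_of_mem_erase ha₂'
  have hv2 : v ≠ a₂ := fun h => (Finset.ne_of_mem_erase ha₂') h.symm
  set W : Finset V := nbr v a₀ ∪ nbr v a₁ ∪ nbr v a₂ ∪ nbr a₀ a₁ ∪
      ((nbr v a₁).erase a₀).biUnion (nbr a₀) ∪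
      ((nbr v a₀).erase a₁).biUnion (nbr a₁) ∪
      ((nbr v a₀).erase a₂).biUnion (nbr a₂) with hW
  have key : ∀ (x y : V) (Tx Ty T : Finset V), v ∉ Tx → x ∈ Tx → insert v Tx ∈ E →
      v ∉ Ty → y ∈ Ty → insert v Ty ∈ E →
      x ∉ T → y ∉ T → v ∉ T → insert x (insert y T) ∈ E →
      A ⊆ Tx ∪ Ty ∪ T → x ∈ W := by
    intro x y Tx Ty T hvTx hxTx hEx hvTy hyTy hEy hxT hyT hvT hET hAsub
    have hvA : v ∉ A := by
      intro hv
      rcases Finset.mem_union.mp (hAsub hv) with h | h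
      · rcases Finset.mem_union.mp h with h | h
        · exact hvTx h
        · exact hvTy h
      · exact hvT h
    have hW7 : x ∈ ((nbr v a₀).erase a₂).biUnion (nbr a₂) → x ∈ W := fun h =>
      hW ▸ Finset.mem_union_right _ h
    have hW6 : x ∈ ((nbr v a₀).erase a₁).biUnion (nbr a₁) → x ∈ W := fun h =>
      hW ▸ Finset.mem_union_left _ (Finset.mem_union_right _ h)
    have hW5 : x ∈ ((nbr v a₁).erase a₀).biUnion (nbr a₀) → x ∈ W := fun h =>
      hW ▸ Finset.mem_union_left _ (Finset.mem_union_left _ (Finset.mem_union_right _ h))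
    have hW4 : x ∈ nbr a₀ a₁ → x ∈ W := fun h =>
      hW ▸ Finset.mem_union_left _ (Finset.mem_union_left _ (Finset.mem_union_left _
        (Finset.mem_union_right _ h)))
    have hW3 : x ∈ nbr v a₂ → x ∈ W := fun h =>
      hW ▸ Finset.mem_union_left _ (Finset.mem_union_left _ (Finset.mem_union_left _
        (Finset.mem_union_left _ (Finset.mem_union_right _ h))))
    have hW2 : x ∈ nbr v a₁ → x ∈ W := fun h =>
      hW ▸ Finset.mem_union_left _ (Finset.mem_union_left _ (Finset.mem_union_left _
        (Finset.mem_union_left _ (Finset.mem_union_left _ (Finset.mem_union_right _ h)))))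
    have hW1 : x ∈ nbr v a₀ → x ∈ W := fun h =>
      hW ▸ Finset.mem_union_left _ (Finset.mem_union_left _ (Finset.mem_union_left _
        (Finset.mem_union_left _ (Finset.mem_union_left _ (Finset.mem_union_left _ h)))))
    have hxex : x ∈ insert v Tx := Finset.mem_insert_of_mem hxTx
    have hyey : y ∈ insert v Ty := Finset.mem_insert_of_mem hyTy
    have hxeT : x ∈ insert x (insert y T) := Finset.mem_insert_self _ _
    have hyeT : y ∈ insert x (insert y T) :=
      Finset.mem_insert_of_mem (Finset.mem_insert_self _ _)
    rcases Finset.mem_union.mp (hAsub ha₀A) with h0' | h0T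
    · rcases Finset.mem_union.mp h0' with h0x | h0y
      · -- a₀ ∈ Tx
        exact hW1 (hsub _ hEx v a₀ (Finset.mem_insert_self _ _)
          (Finset.mem_insert_of_mem h0x) hxex)
      · -- a₀ ∈ Ty
        rcases Finset.mem_union.mp (hAsub ha₁A) with h1' | h1T
        · rcases Finset.mem_union.mp h1' with h1x | h1y
          · exact hW2 (hsub _ hEx v a₁ (Finset.mem_insert_self _ _)
              (Finset.mem_insert_of_mem h1x) hxex)
          · -- a₁ ∈ Ty : use a₂
            have heynbr : nbr v a₀ = insert v Ty :=
              heq _ hEy v a₀ hv0 (Finset.mem_insert_self _ _) (Finset.mem_insert_of_mem h0y)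
            have hnex : ∃ a ∈ A.erase v, a ∉ nbr v a₀ := by
              by_contra hcon
              push_neg at hcon
              have hsubA : A ⊆ Ty := by
                intro a ha
                have hane : a ≠ v := fun h => hvA (h ▸ ha)
                have := hcon a (Finset.mem_erase.mpr ⟨hane, ha⟩)
                rw [heynbr] at this
                rcases Finset.mem_insert.mp this with rfl | h
                · exact absurd ha hvA
                · exact h
              have hTyc : (insert v Ty).card = k := huniform _ hEy
              rw [Finset.card_insert_of_notMem hvTy] at hTyc
              have := Finset.card_le_card hsubA
              omega
            have ha₂nb := ha₂n hnex
            rcases Finset.mem_union.mp (hAsub ha₂A) with h2' | h2T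
            · rcases Finset.mem_union.mp h2' with h2x | h2y
              · exact hW3 (hsub _ hEx v a₂ (Finset.mem_insert_self _ _)
                  (Finset.mem_insert_of_mem h2x) hxex)
              · exact absurd (heynbr ▸ (Finset.mem_insert_of_mem h2y : a₂ ∈ insert v Ty)) ha₂nb
            · -- a₂ ∈ T
              apply hW7
              refine Finset.mem_biUnion.mpr ⟨y, ?_, ?_⟩
              · refine Finset.mem_erase.mpr ⟨fun h => hyT (by rw [h]; exact h2T), ?_⟩
                rw [heynbr]; exact hyey
              · exact hsub _ hET a₂ y
                  (Finset.mem_insert_of_mem (Finset.mem_insert_of_mem h2T)) hyeT hxeT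
        · -- a₁ ∈ T
          apply hW6
          refine Finset.mem_biUnion.mpr ⟨y, ?_, ?_⟩
          · refine Finset.mem_erase.mpr ⟨fun h => hyT (by rw [h]; exact h1T), ?_⟩
            exact hsub _ hEy v a₀ (Finset.mem_insert_self _ _)
              (Finset.mem_insert_of_mem h0y) hyey
          · exact hsub _ hET a₁ y
              (Finset.mem_insert_of_mem (Finset.mem_insert_of_mem h1T)) hyeT hxeT
    · -- a₀ ∈ T
      rcases Finset.mem_union.mp (hAsub ha₁A) with h1' | h1T
      · rcases Finset.mem_union.mp h1' with h1x | h1y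
        · exact hW2 (hsub _ hEx v a₁ (Finset.mem_insert_self _ _)
            (Finset.mem_insert_of_mem h1x) hxex)
        · apply hW5
          refine Finset.mem_biUnion.mpr ⟨y, ?_, ?_⟩
          · refine Finset.mem_erase.mpr ⟨fun h => hyT (by rw [h]; exact h0T), ?_⟩
            exact hsub _ hEy v a₁ (Finset.mem_insert_self _ _)
              (Finset.mem_insert_of_mem h1y) hyey
          · exact hsub _ hET a₀ y
              (Finset.mem_insert_of_mem (Finset.mem_insert_of_mem h0T)) hyeT hxeT
      · -- a₁ ∈ T
        exact hW4 (hsub _ hET a₀ a₁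
          (Finset.mem_insert_of_mem (Finset.mem_insert_of_mem h0T))
          (Finset.mem_insert_of_mem (Finset.mem_insert_of_mem h1T)) hxeT)
  have hbig : ∀ a b : V, v ≠ b → (((nbr v b).erase a).biUnion (nbr a)).card ≤ k * k := by
    intro a b hvb
    calc (((nbr v b).erase a).biUnion (nbr a)).card
        ≤ ∑ c ∈ (nbr v b).erase a, (nbr a c).card := Finset.card_biUnion_le
      _ ≤ ((nbr v b).erase a).card * k := by
          have := Finset.sum_le_card_nsmul ((nbr v b).erase a) (fun c => (nbr a c).card) k
            (fun c hc => hcard a c (fun h => (Finset.mem_erase.mp hc).1 h.symm))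
          simpa [smul_eq_mul] using this
      _ ≤ k * k := by
          have h1 : ((nbr v b).erase a).card ≤ (nbr v b).card :=
            Finset.card_le_card (Finset.erase_subset _ _)
          exact Nat.mul_le_mul (le_trans h1 (hcard v b hvb)) le_rfl
  have hWcard : W.card ≤ 3 * k ^ 2 + 4 * k := by
    have c1 := hcard v a₀ hv0
    have c2 := hcard v a₁ hv1
    have c3 := hcard v a₂ hv2
    have c4 := hcard a₀ a₁ hne01
    have b1 := hbig a₀ a₁ hv1
    have b2 := hbig a₁ a₀ hv0
    have b3 := hbig a₂ a₀ hv0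
    have hle : W.card ≤ (nbr v a₀).card + (nbr v a₁).card + (nbr v a₂).card + (nbr a₀ a₁).card
        + (((nbr v a₁).erase a₀).biUnion (nbr a₀)).card
        + (((nbr v a₀).erase a₁).biUnion (nbr a₁)).card
        + (((nbr v a₀).erase a₂).biUnion (nbr a₂)).card := by
      rw [hW]
      refine le_trans (Finset.card_union_le _ _) (Nat.add_le_add ?_ le_rfl)
      refine le_trans (Finset.card_union_le _ _) (Nat.add_le_add ?_ le_rfl)
      refine le_trans (Finset.card_union_le _ _) (Nat.add_le_add ?_ le_rfl)
      refine le_trans (Finset.card_union_le _ _) (Nat.add_le_add ?_ le_rfl)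
      refine le_trans (Finset.card_union_le _ _) (Nat.add_le_add ?_ le_rfl)
      exact Finset.card_union_le _ _
    have hkk : k * k = k ^ 2 := (sq k).symm
    omega
  refine le_trans (le_trans (Set.ncard_le_ncard ?_ (Finset.powersetCard 2 W).finite_toSet)
    (le_of_eq (Set.ncard_coe_finset _))) ?_
  · rintro p ⟨x, y, hxy, rfl, hxv, hyv, Tx, Ty, T, c1, c2, c3, c4, c5, c6, c7, c8, c9, c10, c11⟩
    rw [Finset.mem_coe, Finset.mem_powersetCard]
    constructor
    · intro z hz
      rcases Finset.mem_insert.mp hz with rfl | hz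
      · exact key z y Tx Ty T c1 c2 c3 c4 c5 c6 c7 c8 c9 c10 c11
      · rw [Finset.mem_singleton] at hz
        subst hz
        refine key z x Ty Tx T c4 c5 c6 c1 c2 c3 c8 c7 c9 ?_ ?_
        · rwa [Finset.insert_comm]
        · rwa [Finset.union_comm Tx Ty] at c11
    · exact Finset.card_pair hxy
  · rw [Finset.card_powersetCard, Nat.choose_two_right]
    apply Nat.div_le_of_le_mul
    have h1 : W.card * (W.card - 1) ≤ W.card * W.card :=
      Nat.mul_le_mul_left _ (Nat.sub_le _ _)
    have h2 : W.card * W.card ≤ (3 * k ^ 2 + 4 * k) * (3 * k ^ 2 + 4 * k) :=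
      Nat.mul_le_mul hWcard hWcard
    have h3 : (3 * k ^ 2 + 4 * k) * (3 * k ^ 2 + 4 * k) ≤ 14 * k ^ 4 * 2 := by nlinarith [hk]
    omega
end

section
/- Let H be a simple k-uniform hypergraph with maximum degree Δ, v a vertex, and F the family of (3k−4)-sets S_{x,y} associated to covered pairs as above. Then for any nonempty vertex set A with 1 ≤ |A| ≤ k−1, the number of members of F containing A is at most C·Δ for a constant C depending only on k. -/
/-- For the family F of (3k−4)-sets S_{x,y} associated to covered pairs in the
neighborhood of a vertex v of a simple k-uniform hypergraph of maximum degree Δ,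
any set A with 1 ≤ |A| ≤ k−1 is contained in at most C·Δ members of F,
with C depending only on k. -/
theorem stmt6 (k : ℕ) (hk : 3 ≤ k) :
    ∃ C : ℕ, ∀ (V : Type) [DecidableEq V] [Fintype V] (E : Finset (Finset V)) (Δ : ℕ),
      (∀ e ∈ E, e.card = k) →
      (∀ e ∈ E, ∀ f ∈ E, e ≠ f → (e ∩ f).card ≤ 1) →
      (∀ w : V, (E.filter (fun e => w ∈ e)).card ≤ Δ) →
      ∀ (v : V) (A : Finset V), 1 ≤ A.card → A.card ≤ k - 1 →
        {p : Finset V | ∃ x y : V, x ≠ y ∧ p = {x, y} ∧ x ≠ v ∧ y ≠ v ∧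
            ∃ Tx Ty T : Finset V,
              v ∉ Tx ∧ x ∈ Tx ∧ insert v Tx ∈ E ∧
              v ∉ Ty ∧ y ∈ Ty ∧ insert v Ty ∈ E ∧
              x ∉ T ∧ y ∉ T ∧ v ∉ T ∧ insert x (insert y T) ∈ E ∧
              A ⊆ Tx ∪ Ty ∪ T}.ncard
          ≤ C * Δ := by
  refine ⟨3 * (k * k), ?_⟩
  intro V _ _ E Δ hcard hsimple hdeg v A hA1 hA2
  obtain ⟨a, ha⟩ := Finset.card_pos.mp hA1
  set S := {p : Finset V | ∃ x y : V, x ≠ y ∧ p = {x, y} ∧ x ≠ v ∧ y ≠ v ∧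
            ∃ Tx Ty T : Finset V,
              v ∉ Tx ∧ x ∈ Tx ∧ insert v Tx ∈ E ∧
              v ∉ Ty ∧ y ∈ Ty ∧ insert v Ty ∈ E ∧
              x ∉ T ∧ y ∉ T ∧ v ∉ T ∧ insert x (insert y T) ∈ E ∧
              A ⊆ Tx ∪ Ty ∪ T} with hS
  by_cases hav : a = v
  · have : S = ∅ := by
      rw [Set.eq_empty_iff_forall_notMem]
      rintro p ⟨x, y, hxy, hp, hxv, hyv, Tx, Ty, T, hvTx, hxTx, heTx, hvTy, hyTy, heTy,
        hxT, hyT, hvT, heT, hAsub⟩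
      have := hAsub ha
      rw [Finset.mem_union, Finset.mem_union] at this
      subst hav
      tauto
    rw [this, Set.ncard_empty]
    exact Nat.zero_le _
  · -- a ≠ v
    set B1 : Finset (Finset V) :=
      (E.filter (fun e => a ∈ e)).biUnion
        (fun e => e.biUnion (fun x => e.image (fun y => ({x, y} : Finset V)))) with hB1
    set B2 : Finset (Finset V) :=
      (E.filter (fun e => v ∈ e ∧ a ∈ e)).biUnion
        (fun e0 => e0.biUnion (fun x =>
          (E.filter (fun f => x ∈ f)).biUnion
            (fun f => f.image (fun y => ({x, y} : Finset V))))) with hB2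
    have hsub : S ⊆ ↑(B1 ∪ B2) := by
      rintro p ⟨x, y, hxy, hp, hxv, hyv, Tx, Ty, T, hvTx, hxTx, heTx, hvTy, hyTy, heTy,
        hxT, hyT, hvT, heT, hAsub⟩
      have haU := hAsub ha
      rw [Finset.mem_union, Finset.mem_union] at haU
      simp only [Finset.coe_union, Set.mem_union, Finset.mem_coe]
      rcases haU with (haTx | haTy) | haT
      · right
        rw [hB2]
        rw [Finset.mem_biUnion]
        refine ⟨insert v Tx, Finset.mem_filter.mpr ⟨heTx, Finset.mem_insert_self _ _,
          Finset.mem_insert_of_mem haTx⟩, ?_⟩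
        rw [Finset.mem_biUnion]
        refine ⟨x, Finset.mem_insert_of_mem hxTx, ?_⟩
        rw [Finset.mem_biUnion]
        refine ⟨insert x (insert y T), Finset.mem_filter.mpr ⟨heT, Finset.mem_insert_self _ _⟩, ?_⟩
        exact Finset.mem_image.mpr ⟨y, Finset.mem_insert_of_mem (Finset.mem_insert_self _ _), hp.symm⟩
      · right
        rw [hB2]
        rw [Finset.mem_biUnion]
        refine ⟨insert v Ty, Finset.mem_filter.mpr ⟨heTy, Finset.mem_insert_self _ _,
          Finset.mem_insert_of_mem haTy⟩, ?_⟩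
        rw [Finset.mem_biUnion]
        refine ⟨y, Finset.mem_insert_of_mem hyTy, ?_⟩
        rw [Finset.mem_biUnion]
        refine ⟨insert x (insert y T), Finset.mem_filter.mpr
          ⟨heT, Finset.mem_insert_of_mem (Finset.mem_insert_self _ _)⟩, ?_⟩
        refine Finset.mem_image.mpr ⟨x, Finset.mem_insert_self _ _, ?_⟩
        rw [Finset.pair_comm, hp]
      · left
        rw [hB1]
        rw [Finset.mem_biUnion]
        refine ⟨insert x (insert y T), Finset.mem_filter.mpr
          ⟨heT, Finset.mem_insert_of_mem (Finset.mem_insert_of_mem haT)⟩, ?_⟩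
        rw [Finset.mem_biUnion]
        refine ⟨x, Finset.mem_insert_self _ _, ?_⟩
        exact Finset.mem_image.mpr ⟨y, Finset.mem_insert_of_mem (Finset.mem_insert_self _ _), hp.symm⟩
    have hfin : S.Finite := Set.Finite.subset (B1 ∪ B2).finite_toSet hsub
    have hle : S.ncard ≤ (B1 ∪ B2).card := by
      have := Set.ncard_le_ncard hsub (B1 ∪ B2).finite_toSet
      rwa [Set.ncard_coe_finset] at this
    -- card bounds
    have hB1card : B1.card ≤ Δ * (k * k) := by
      apply Finset.card_biUnion_le_card_mul _ _ _ ?_ |>.trans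
      · exact Nat.mul_le_mul_right _ (hdeg a)
      · intro e he
        have hek : e.card = k := hcard e (Finset.mem_filter.mp he).1
        apply Finset.card_biUnion_le_card_mul _ _ _ ?_ |>.trans
        · rw [hek]
        · intro x _
          calc (e.image fun y => ({x, y} : Finset V)).card ≤ e.card := Finset.card_image_le
            _ = k := hek
    have hone : (E.filter (fun e => v ∈ e ∧ a ∈ e)).card ≤ 1 := by
      rw [Finset.card_le_one]
      intro e he f hf
      simp only [Finset.mem_filter] at he hf
      by_contra hne
      have h2 : ({v, a} : Finset V) ⊆ e ∩ f := by
        intro z hz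
        simp only [Finset.mem_insert, Finset.mem_singleton] at hz
        rw [Finset.mem_inter]
        rcases hz with rfl | rfl <;> tauto
      have hsi := hsimple e he.1 f hf.1 hne
      have hc : ({v, a} : Finset V).card = 2 := by
        rw [Finset.card_insert_of_notMem (by simpa using fun h => hav h.symm),
          Finset.card_singleton]
      have := Finset.card_le_card h2
      omega
    have hB2card : B2.card ≤ 1 * (k * (Δ * k)) := by
      apply Finset.card_biUnion_le_card_mul _ _ _ ?_ |>.trans
      · exact Nat.mul_le_mul_right _ hone
      · intro e0 he0
        have he0k : e0.card = k := hcard e0 (Finset.mem_filter.mp he0).1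
        apply Finset.card_biUnion_le_card_mul _ _ _ ?_ |>.trans
        · rw [he0k]
        · intro x _
          apply Finset.card_biUnion_le_card_mul _ _ _ ?_ |>.trans
          · exact Nat.mul_le_mul_right _ (hdeg x)
          · intro f hf
            calc (f.image fun y => ({x, y} : Finset V)).card ≤ f.card := Finset.card_image_le
              _ = k := hcard f (Finset.mem_filter.mp hf).1
    calc S.ncard ≤ (B1 ∪ B2).card := hle
      _ ≤ B1.card + B2.card := Finset.card_union_le _ _
      _ ≤ Δ * (k * k) + 1 * (k * (Δ * k)) := Nat.add_le_add hB1card hB2card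
      _ ≤ 3 * (k * k) * Δ := by nlinarith
end

section
/- In the semi-random coloring procedure, every edge of H is properly colored: it is impossible that all k vertices of an edge receive the same permanent color. Precisely: suppose vertices u_1,…,u_k forming an edge are permanently colored at times t_1 ≤ ⋯ ≤ t_k with colors κ(u_j), where a vertex u colored at time t must have its color in Θ^(t)(u) \ (A^(t)(u) ∪ B^(t)(u)), the sets A^(t)(u) are nondecreasing in t and contain L^(t)(u), and L^(t)(u) contains every color c such that either (i) all other k−1 vertices of an edge through u tentatively activate c at time t, or (ii) an edge e of the auxiliary hypergraph H_i^(t) through u with κ(e) = c has its other i−1 vertices tentatively activating c, where H_i^(t) records edges whose remaining k−i vertices were already permanently colored c. Then not all κ(u_j) are equal. -/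
/-- Correctness of the semi-random coloring procedure: if every vertex colored at
time t gets a color in Θ^(t)(u) \ A^(t)(u), the sets A are nondecreasing and contain
the loss sets L, and a color c enters L^(s)(u) whenever in some edge through u every
other vertex was either already permanently colored c or tentatively activates c at
time s, then no edge is monochromatic. -/
theorem stmt17 (V C : Type) [DecidableEq V] (E : Finset (Finset V)) (k : ℕ)
    (hk : 2 ≤ k)
    (huniform : ∀ e ∈ E, e.card = k)
    (hsimple : ∀ e ∈ E, ∀ f ∈ E, e ≠ f → (e ∩ f).card ≤ 1)
    (t : V → ℕ) (κ : V → C)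
    (Θ A L : ℕ → V → Set C)
    (hcol : ∀ v, κ v ∈ Θ (t v) v ∧ κ v ∉ A (t v) v)
    (hmono : ∀ s s' v, s ≤ s' → A s v ⊆ A s' v)
    (hLA : ∀ s v, L s v ⊆ A s v)
    (hloss : ∀ (s : ℕ) (u : V) (c : C) (e : Finset V), e ∈ E → u ∈ e →
      (∀ w ∈ e, w ≠ u → (t w < s ∧ κ w = c) ∨ (s ≤ t w ∧ c ∈ Θ s w)) →
      c ∈ L s u) :
    ∀ e ∈ E, ∃ x ∈ e, ∃ y ∈ e, κ x ≠ κ y := by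
  intro e he
  by_contra h
  push_neg at h
  -- e is nonempty since its card is k ≥ 2
  have hne : e.Nonempty := by
    rw [← Finset.card_pos, huniform e he]; omega
  -- pick u ∈ e with maximal time
  obtain ⟨u, hu, hmax⟩ := e.exists_max_image t hne
  set c := κ u with hc
  have hmem : c ∈ L (t u) u := by
    apply hloss (t u) u c e he hu
    intro w hw hwu
    rcases lt_or_eq_of_le (hmax w hw) with hlt | heq
    · exact Or.inl ⟨hlt, h w hw u hu⟩
    · refine Or.inr ⟨le_of_eq heq.symm, ?_⟩
      have : κ w = c := h w hw u hu
      rw [← this, ← heq]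
      exact (hcol w).1
  exact (hcol u).2 (hLA (t u) u hmem)
end
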